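/- Let R, l > 0 and let u be a unit vector in the Euclidean plane (EuclideanSpace ℝ (Fin 2), ‖u‖ = 1). Then the Lebesgue measure of the set {x | ∃ t ∈ [0, l], x + t·u ∈ closedBall 0 R} of positions from which the segment of length l in direction u hits the disk of radius R equals πR² + 2Rl. -/

import Mathlib

open Metric MeasureTheory

open Real in
private lemma seg_aux_iff (R l x y : ℝ) (hl : 0 < l) :
    (∃ t ∈ Set.Icc (0:ℝ) l, (x + t)^2 + y^2 ≤ R^2) ↔
    (y^2 ≤ R^2 ∧ -(l + Real.sqrt (R^2 - y^2)) ≤ x ∧ x ≤ Real.sqrt (R^2 - y^2)) := by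
  constructor
  · rintro ⟨t, ⟨ht0, htl⟩, h⟩
    have hy : y^2 ≤ R^2 := by nlinarith [sq_nonneg (x+t)]
    have hs : Real.sqrt (R^2 - y^2) ^ 2 = R^2 - y^2 := Real.sq_sqrt (by linarith)
    have hsn : 0 ≤ Real.sqrt (R^2 - y^2) := Real.sqrt_nonneg _
    refine ⟨hy, ?_, ?_⟩ <;> nlinarith [sq_nonneg (x + t - Real.sqrt (R^2 - y^2)),
      sq_nonneg (x + t + Real.sqrt (R^2 - y^2))]
  · rintro ⟨hy, hx1, hx2⟩
    have hs : Real.sqrt (R^2 - y^2) ^ 2 = R^2 - y^2 := Real.sq_sqrt (by linarith)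
    have hsn : 0 ≤ Real.sqrt (R^2 - y^2) := Real.sqrt_nonneg _
    rcases le_total 0 x with h | h
    · exact ⟨0, ⟨le_refl 0, hl.le⟩, by nlinarith⟩
    · rcases le_total (-l) x with h2 | h2
      · exact ⟨-x, ⟨by linarith, by linarith⟩, by nlinarith⟩
      · exact ⟨l, ⟨hl.le, le_refl l⟩, by nlinarith⟩

open Real in
private lemma seg_aux_integral (R : ℝ) (hR : 0 < R) :
    ∫ x in (-R)..R, Real.sqrt (R^2 - x^2) = π * R^2 / 2 := by
  have h := intervalIntegral.integral_comp_mul_left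
    (a := (-1:ℝ)) (b := 1) (fun x => Real.sqrt (R^2 - x^2)) (ne_of_gt hR)
  have h2 : ∀ y : ℝ, Real.sqrt (R^2 - (R*y)^2) = R * Real.sqrt (1 - y^2) := by
    intro y
    rw [show R^2 - (R*y)^2 = R^2 * (1 - y^2) by ring, Real.sqrt_mul (sq_nonneg R),
      Real.sqrt_sq hR.le]
  simp only [h2] at h
  rw [intervalIntegral.integral_const_mul] at h
  rw [integral_sqrt_one_sub_sq] at h
  have := h.symm
  rw [smul_eq_mul] at this
  rw [show R * -1 = -R by ring, show R * 1 = R by ring] at this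
  field_simp at this ⊢
  nlinarith [this]

open Real in
private lemma seg_aux_volume (R l : ℝ) (hR : 0 < R) (hl : 0 < l) :
    volume {p : ℝ × ℝ | ∃ t ∈ Set.Icc (0:ℝ) l, (p.2 + t)^2 + p.1^2 ≤ R^2}
      = ENNReal.ofReal (π * R ^ 2 + 2 * R * l) := by
  have hcont : Continuous fun x : ℝ => Real.sqrt (R^2 - x^2) :=
    Real.continuous_sqrt.comp (by continuity)
  have hset : {p : ℝ × ℝ | ∃ t ∈ Set.Icc (0:ℝ) l, (p.2 + t)^2 + p.1^2 ≤ R^2}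
      = {p : ℝ × ℝ | p.1^2 ≤ R^2 ∧ p.2 ∈ Set.Icc (-(l + Real.sqrt (R^2 - p.1^2)))
          (Real.sqrt (R^2 - p.1^2))} := by
    ext p
    exact (seg_aux_iff R l p.2 p.1 hl).trans (by simp [Set.mem_Icc, and_assoc])
  rw [hset]
  set S := {p : ℝ × ℝ | p.1^2 ≤ R^2 ∧ p.2 ∈ Set.Icc (-(l + Real.sqrt (R^2 - p.1^2)))
      (Real.sqrt (R^2 - p.1^2))} with hS
  have hmeas : MeasurableSet S := by
    have h1 : S = ({p : ℝ × ℝ | p.1^2 ≤ R^2} ∩ {p : ℝ × ℝ | -(l + Real.sqrt (R^2 - p.1^2)) ≤ p.2})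
        ∩ {p : ℝ × ℝ | p.2 ≤ Real.sqrt (R^2 - p.1^2)} := by
      ext p; simp only [hS, Set.mem_setOf_eq, Set.mem_Icc, Set.mem_inter_iff]; tauto
    rw [h1]
    refine MeasurableSet.inter (MeasurableSet.inter ?_ ?_) ?_
    · exact measurableSet_le ((continuous_pow 2).comp continuous_fst).measurable measurable_const
    · exact measurableSet_le
        ((continuous_neg.comp ((continuous_const.add (hcont.comp continuous_fst)))).measurable)
        measurable_snd
    · exact measurableSet_le measurable_snd (hcont.comp continuous_fst).measurable
  rw [MeasureTheory.Measure.volume_eq_prod, Measure.prod_apply hmeas]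
  have hslice : ∀ x : ℝ, volume (Prod.mk x ⁻¹' S)
      = (Set.Icc (-R) R).indicator
          (fun x => ENNReal.ofReal (l + 2 * Real.sqrt (R^2 - x^2))) x := by
    intro x
    rcases le_or_gt (x^2) (R^2) with h | h
    · have hx : x ∈ Set.Icc (-R) R := by constructor <;> nlinarith
      rw [Set.indicator_of_mem hx]
      have h2 : Prod.mk x ⁻¹' S = Set.Icc (-(l + Real.sqrt (R^2 - x^2)))
          (Real.sqrt (R^2 - x^2)) := by
        ext y; simp [hS, h]
      rw [h2, Real.volume_Icc]
      congr 1; ring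
    · have hx : x ∉ Set.Icc (-R) R := by
        intro hx; rw [Set.mem_Icc] at hx; nlinarith
      rw [Set.indicator_of_notMem hx]
      have h2 : Prod.mk x ⁻¹' S = ∅ := by
        ext y; simp only [hS, Set.mem_preimage, Set.mem_setOf_eq, Set.mem_empty_iff_false,
          iff_false]
        intro hcon; exact absurd hcon.1 (not_le.mpr h)
      simp [h2]
  simp_rw [hslice]
  rw [lintegral_indicator measurableSet_Icc]
  have hcont2 : Continuous fun x : ℝ => l + 2 * Real.sqrt (R^2 - x^2) := by continuity
  rw [← MeasureTheory.ofReal_integral_eq_lintegral_ofReal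
    hcont2.integrableOn_Icc
    (Filter.Eventually.of_forall fun x => by positivity)]
  congr 1
  rw [MeasureTheory.integral_Icc_eq_integral_Ioc,
    ← intervalIntegral.integral_of_le (by linarith : -R ≤ R)]
  rw [intervalIntegral.integral_add (f := fun _ => l) (g := fun x => 2 * Real.sqrt (R^2 - x^2)) (intervalIntegrable_const)
    ((continuous_const.mul hcont : Continuous fun x : ℝ => 2 * Real.sqrt (R^2 - x^2)).intervalIntegrable _ _)]
  rw [intervalIntegral.integral_const, intervalIntegral.integral_const_mul, seg_aux_integral R hR]
  simp; ring

theorem segment_hitting_measure_disk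
    (R l : ℝ) (hR : 0 < R) (hl : 0 < l)
    (u : EuclideanSpace ℝ (Fin 2)) (hu : ‖u‖ = 1) :
    volume {x : EuclideanSpace ℝ (Fin 2) |
        ∃ t ∈ Set.Icc (0 : ℝ) l, x + t • u ∈ closedBall (0 : EuclideanSpace ℝ (Fin 2)) R}
      = ENNReal.ofReal (Real.pi * R ^ 2 + 2 * R * l) := by
  set S := {x : EuclideanSpace ℝ (Fin 2) |
      ∃ t ∈ Set.Icc (0 : ℝ) l, x + t • u ∈ closedBall (0 : EuclideanSpace ℝ (Fin 2)) R} with hSdef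
  have hSc : IsCompact S := by
    have himg : S = (fun q : (EuclideanSpace ℝ (Fin 2)) × ℝ => q.1 - q.2 • u) ''
        (closedBall 0 R ×ˢ Set.Icc 0 l) := by
      ext x
      simp only [hSdef, Set.mem_setOf_eq, Set.mem_image, Set.mem_prod]
      constructor
      · rintro ⟨t, ht, hb⟩; exact ⟨(x + t • u, t), ⟨hb, ht⟩, by simp⟩
      · rintro ⟨⟨b, t⟩, ⟨hb, ht⟩, rfl⟩; exact ⟨t, ht, by simpa using hb⟩
    rw [himg]
    exact ((isCompact_closedBall 0 R).prod isCompact_Icc).image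
      (continuous_fst.sub (continuous_snd.smul continuous_const))
  have hSm : MeasurableSet S := hSc.isClosed.measurableSet
  let e : ℂ ≃ₗᵢ[ℝ] EuclideanSpace ℝ (Fin 2) := Complex.orthonormalBasisOneI.repr
  set c : ℂ := e.symm u with hcdef
  have hcnorm : ‖c‖ = 1 := by rw [hcdef, e.symm.norm_map, hu]
  let cc : Circle := ⟨c, show c ∈ sphere (0:ℂ) 1 from mem_sphere_zero_iff_norm.mpr hcnorm⟩
  let g : ℝ × ℝ → EuclideanSpace ℝ (Fin 2) :=
    fun p => e ((rotation cc) (Complex.measurableEquivRealProd.symm p.swap))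
  have m1 : MeasurePreserving (Prod.swap : ℝ × ℝ → ℝ × ℝ) volume volume := by
    rw [MeasureTheory.Measure.volume_eq_prod]
    exact Measure.measurePreserving_swap
  have m2 : MeasurePreserving (Complex.measurableEquivRealProd.symm) volume volume :=
    Complex.volume_preserving_equiv_real_prod.symm Complex.measurableEquivRealProd
  have m3 : MeasurePreserving (rotation cc) volume volume :=
    (rotation cc).measurePreserving
  have m4 : MeasurePreserving e volume volume := e.measurePreserving
  have mp : MeasurePreserving g volume volume := m4.comp (m3.comp (m2.comp m1))
  have key : g ⁻¹' S = {p : ℝ × ℝ | ∃ t ∈ Set.Icc (0:ℝ) l, (p.2 + t)^2 + p.1^2 ≤ R^2} := by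
    ext p
    simp only [Set.mem_preimage, hSdef, Set.mem_setOf_eq, mem_closedBall, dist_eq_norm, sub_zero]
    refine exists_congr fun t => and_congr_right fun _ => ?_
    have hgu : g p + t • u = e ((rotation cc) (Complex.measurableEquivRealProd.symm p.swap)
        + t • c) := by
      rw [map_add, e.map_smul, hcdef, e.apply_symm_apply]
    rw [hgu, e.norm_map]
    have hz : (rotation cc) (Complex.measurableEquivRealProd.symm p.swap) + t • c
        = c * (Complex.measurableEquivRealProd.symm p.swap + (t : ℂ)) := by
      rw [rotation_apply, Complex.real_smul]
      show c * _ + _ = _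
      ring
    rw [hz, norm_mul, hcnorm, one_mul]
    set ζ : ℂ := Complex.measurableEquivRealProd.symm p.swap + (t : ℂ) with hζ
    have hre : ζ.re = p.2 + t := by simp [hζ, Complex.measurableEquivRealProd_symm_apply]
    have him : ζ.im = p.1 := by simp [hζ, Complex.measurableEquivRealProd_symm_apply]
    have hsq : ‖ζ‖ ^ 2 = (p.2 + t)^2 + p.1^2 := by
      rw [Complex.sq_norm, Complex.normSq_apply, hre, him]; ring
    constructor
    · intro h
      have := norm_nonneg ζ
      nlinarith
    · intro h
      have := norm_nonneg ζ
      nlinarith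
  rw [← mp.measure_preimage hSm.nullMeasurableSet, key, seg_aux_volume R l hR hl]
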